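/- For every permutation ω ∈ S_n and every index i ∈ {1,…,n}, the entries of the Rajchgot code and the Lehmer code of ω satisfy r_i ≥ c_i. -/
import Mathlib


/-- The Lehmer code of a permutation: `lehmer ω i` counts indices `j > i` with `ω i > ω j`. -/
def lehmer {n : ℕ} (ω : Equiv.Perm (Fin n)) (i : Fin n) : ℕ :=
  (Finset.univ.filter fun j => i < j ∧ ω j < ω i).card

/-- The Rajchgot code of a permutation: `rajchgot ω i` is the minimum number of entries that
must be removed from the sequence `ω i, ω (i+1), …, ω (n-1)` so that the remaining
subsequence is increasing and begins with `ω i`. -/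
noncomputable def rajchgot {n : ℕ} (ω : Equiv.Perm (Fin n)) (i : Fin n) : ℕ :=
  sInf { k : ℕ | ∃ R : Finset (Fin n), R.card = k ∧ (∀ j ∈ R, i ≤ j) ∧ i ∉ R ∧
    ∀ a b : Fin n, i ≤ a → a < b → a ∉ R → b ∉ R → ω a < ω b }

/-- For every permutation `ω ∈ S_n` and every index `i`, the entries of the
Rajchgot code and the Lehmer code of `ω` satisfy `r_i ≥ c_i`. -/
theorem lehmer_le_rajchgot (n : ℕ) (ω : Equiv.Perm (Fin n)) (i : Fin n) :
    lehmer ω i ≤ rajchgot ω i := by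
  have hne : { k : ℕ | ∃ R : Finset (Fin n), R.card = k ∧ (∀ j ∈ R, i ≤ j) ∧ i ∉ R ∧
      ∀ a b : Fin n, i ≤ a → a < b → a ∉ R → b ∉ R → ω a < ω b }.Nonempty := by
    refine ⟨(Finset.univ.filter fun j => i < j).card,
      Finset.univ.filter fun j => i < j, rfl, ?_, ?_, ?_⟩
    · intro j hj; simp at hj; exact hj.le
    · simp
    · intro a b ha hab haR hbR
      simp at haR hbR
      exact absurd (lt_of_le_of_lt ha hab) (not_lt.mpr hbR)
  have hmem := Nat.sInf_mem hne
  obtain ⟨R, hcard, hge, hiR, hinc⟩ := hmem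
  rw [rajchgot, ← hcard]
  apply Finset.card_le_card
  intro j hj
  simp only [Finset.mem_filter, Finset.mem_univ, true_and] at hj
  by_contra hjR
  exact absurd (hinc i j le_rfl hj.1 hiR hjR) (not_lt.mpr hj.2.le)
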